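/- Let f = (f₁,f₂) : ℝ² → ℝ² be a C² vector field compactly supported in 𝔻. Then for all x ∈ ℝ²: (D_u D_v L_α f)(x) = (∂̃₁f₂)(x) − (∂̃₂f₁)(x), where ∂̃₁ = −(1+α)u₁u₂∂₁ + (1−α)u₂²∂₂ and ∂̃₂ = (1−α)u₁²∂₁ − (1+α)u₁u₂∂₂. -/

import Mathlib

open MeasureTheory

noncomputable section

/-- Euclidean dot product on `ℝ × ℝ`. -/
def dot (a b : ℝ × ℝ) : ℝ := a.1 * b.1 + a.2 * b.2

/-- Rotation by `π/2`: `w⊥ = (−w₂, w₁)`. -/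
def perp (w : ℝ × ℝ) : ℝ × ℝ := (-w.2, w.1)

/-- The open unit disc in `ℝ²`. -/
def disc : Set (ℝ × ℝ) := {p : ℝ × ℝ | p.1 ^ 2 + p.2 ^ 2 < 1}

/-- Directional derivative along a constant vector `w`. -/
def Dc (w : ℝ × ℝ) (F : ℝ × ℝ → ℝ) (x : ℝ × ℝ) : ℝ := fderiv ℝ F x w

/-- The tilde partial derivative `∂̃₁ = −(1+α)u₁u₂∂₁ + (1−α)u₂²∂₂`. -/
def pt1 (α u₁ u₂ : ℝ) (g : ℝ × ℝ → ℝ) (x : ℝ × ℝ) : ℝ :=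
  -(1 + α) * u₁ * u₂ * fderiv ℝ g x (1, 0) + (1 - α) * u₂ ^ 2 * fderiv ℝ g x (0, 1)

/-- The tilde partial derivative `∂̃₂ = (1−α)u₁²∂₁ − (1+α)u₁u₂∂₂`. -/
def pt2 (α u₁ u₂ : ℝ) (g : ℝ × ℝ → ℝ) (x : ℝ × ℝ) : ℝ :=
  (1 - α) * u₁ ^ 2 * fderiv ℝ g x (1, 0) - (1 + α) * u₁ * u₂ * fderiv ℝ g x (0, 1)

/-- Longitudinal V-line transform with weight `α` and constant branch directions. -/
def Lc (α : ℝ) (u v : ℝ × ℝ) (f : ℝ × ℝ → ℝ × ℝ) (x : ℝ × ℝ) : ℝ :=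
  (- ∫ t in Set.Ioi (0 : ℝ), dot u (f (x + t • u))) +
    α * ∫ t in Set.Ioi (0 : ℝ), dot v (f (x + t • v))

/-- Transverse V-line transform with weight `α` and constant branch directions. -/
def Tc (α : ℝ) (u v : ℝ × ℝ) (f : ℝ × ℝ → ℝ × ℝ) (x : ℝ × ℝ) : ℝ :=
  (- ∫ t in Set.Ioi (0 : ℝ), dot (perp u) (f (x + t • u))) +
    α * ∫ t in Set.Ioi (0 : ℝ), dot (perp v) (f (x + t • v))

namespace VLT

open MeasureTheory Set Filter

set_option linter.unusedSectionVars false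

variable {F : Type*} [NormedAddCommGroup F] [NormedSpace ℝ F]

lemma line_cs (g : ℝ × ℝ → F) (hcs : HasCompactSupport g) (x : ℝ × ℝ) {w : ℝ × ℝ}
    (hw : w ≠ 0) : HasCompactSupport (fun t : ℝ => g (x + t • w)) :=
  hcs.comp_isClosedEmbedding
    (((Homeomorph.addLeft x).isClosedEmbedding).comp (isClosedEmbedding_smul_left hw))

lemma line_integrable (g : ℝ × ℝ → F) (hg : Continuous g) (hcs : HasCompactSupport g)
    (x : ℝ × ℝ) {w : ℝ × ℝ} (hw : w ≠ 0) :
    IntegrableOn (fun t : ℝ => g (x + t • w)) (Set.Ioi 0) :=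
  ((hg.comp (by continuity)).integrable_of_hasCompactSupport
    (line_cs g hcs x hw)).integrableOn

lemma line_escape {R : ℝ} (hR : 0 ≤ R) {w : ℝ × ℝ} (hw : w ≠ 0) (x y : ℝ × ℝ)
    (hy : ‖y - x‖ ≤ 1) {t : ℝ} (ht : (R + ‖x‖ + 1) / ‖w‖ < t) : R < ‖y + t • w‖ := by
  have hw' : 0 < ‖w‖ := norm_pos_iff.2 hw
  have h1 : R + ‖x‖ + 1 < t * ‖w‖ := (div_lt_iff₀ hw').1 ht
  have hx0 : 0 ≤ ‖x‖ := norm_nonneg x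
  have ht0 : 0 < t := by nlinarith
  have h2 : ‖t • w‖ ≤ ‖y + t • w‖ + ‖y‖ := by
    have := norm_add_le (y + t • w) (-y)
    simpa using this
  have h3 : ‖y‖ ≤ ‖x‖ + 1 := by
    have := norm_add_le (y - x) x
    simp at this
    linarith
  rw [norm_smul, Real.norm_eq_abs, abs_of_pos ht0] at h2
  linarith

lemma line_tendsto_zero (g : ℝ × ℝ → F) (hcs : HasCompactSupport g) (x : ℝ × ℝ)
    {w : ℝ × ℝ} (hw : w ≠ 0) :
    Tendsto (fun t : ℝ => g (x + t • w)) atTop (nhds 0) := by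
  obtain ⟨R, hR⟩ := hcs.isBounded.subset_closedBall 0
  have hR0 : (0:ℝ) ≤ max R 0 := le_max_right _ _
  apply Tendsto.congr' _ tendsto_const_nhds
  filter_upwards [eventually_gt_atTop ((max R 0 + ‖x‖ + 1) / ‖w‖)] with t ht
  symm
  apply image_eq_zero_of_notMem_tsupport
  intro hmem
  have h1 := hR hmem
  have h2 := line_escape hR0 hw x x (by simp) ht
  rw [Metric.mem_closedBall, dist_zero_right] at h1
  have : R ≤ max R 0 := le_max_left _ _
  linarith

lemma hasFDerivAt_Ig (g : ℝ × ℝ → ℝ) (hg : ContDiff ℝ 1 g) (hcs : HasCompactSupport g)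
    {w : ℝ × ℝ} (hw : w ≠ 0) (x : ℝ × ℝ) :
    HasFDerivAt (fun y => ∫ t in Set.Ioi (0:ℝ), g (y + t • w))
      (∫ t in Set.Ioi (0:ℝ), fderiv ℝ g (x + t • w)) x := by
  have hg' : Continuous (fderiv ℝ g) := hg.continuous_fderiv one_ne_zero
  have hcs' : HasCompactSupport (fderiv ℝ g) := hcs.fderiv ℝ
  obtain ⟨C, hC⟩ := hcs'.exists_bound_of_continuous hg'
  obtain ⟨R, hRR⟩ := hcs.isBounded.subset_closedBall 0
  set R' : ℝ := (max R 0 + ‖x‖ + 1) / ‖w‖ with hR'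
  have key : ∀ y ∈ Metric.ball x 1, ∀ t ∈ Set.Ioi (0:ℝ), ¬ t ≤ R' →
      fderiv ℝ g (y + t • w) = 0 := by
    intro y hy t _ htR
    have h2 := line_escape (le_max_right R 0) hw x y
      (le_of_lt (by rw [← dist_eq_norm]; exact hy)) (not_le.1 htR)
    by_contra hne
    have hmem : y + t • w ∈ Function.support (fderiv ℝ g) := hne
    have h1 := hRR (tsupport_fderiv_subset ℝ (subset_tsupport _ hmem))
    rw [Metric.mem_closedBall, dist_zero_right] at h1
    linarith [le_max_left R 0]
  apply hasFDerivAt_integral_of_dominated_of_fderiv_le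
    (F' := fun y t => fderiv ℝ g (y + t • w))
    (bound := Set.indicator (Set.Icc 0 R') (fun _ => max C 0)) (Metric.ball_mem_nhds x one_pos)
  · exact Eventually.of_forall fun y =>
      ((hg.continuous.comp (by continuity)).aestronglyMeasurable)
  · exact line_integrable g hg.continuous hcs x hw
  · exact (hg'.comp (by continuity)).aestronglyMeasurable
  · rw [ae_restrict_iff' measurableSet_Ioi]
    apply Eventually.of_forall
    intro t ht y hy
    by_cases htR : t ≤ R'
    · rw [Set.indicator_of_mem (Set.mem_Icc.2 ⟨le_of_lt ht, htR⟩)]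
      exact le_trans (hC _) (le_max_left _ _)
    · rw [key y hy t ht htR, Set.indicator_of_notMem (fun hmem => htR hmem.2)]
      simp [le_max_right C 0]
  · exact ((integrable_indicator_iff measurableSet_Icc).2
      (integrableOn_const measure_Icc_lt_top.ne)).restrict
  · apply Eventually.of_forall
    intro t y _
    have h1 : HasFDerivAt (fun y : ℝ × ℝ => y + t • w) (ContinuousLinearMap.id ℝ (ℝ × ℝ)) y :=
      (hasFDerivAt_id y).add_const (t • w)
    have h2 := (hg.differentiable one_ne_zero (y + t • w)).hasFDerivAt
    rw [← ContinuousLinearMap.comp_id (fderiv ℝ g (y + t • w))]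
    exact h2.comp y h1

lemma integral_fderiv_line (g : ℝ × ℝ → ℝ) (hg : ContDiff ℝ 1 g) (hcs : HasCompactSupport g)
    {w : ℝ × ℝ} (hw : w ≠ 0) (x : ℝ × ℝ) :
    ∫ t in Set.Ioi (0:ℝ), fderiv ℝ g (x + t • w) w = - g x := by
  have hderiv : ∀ t ∈ Set.Ioi (0:ℝ),
      HasDerivAt (fun t : ℝ => g (x + t • w)) (fderiv ℝ g (x + t • w) w) t := by
    intro t _
    have h1 : HasDerivAt (fun t : ℝ => x + t • w) w t := by
      simpa using ((hasDerivAt_id t).smul_const w).const_add x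
    have h2 := (hg.differentiable one_ne_zero (x + t • w)).hasFDerivAt
    exact h2.comp_hasDerivAt t h1
  have hint : IntegrableOn (fun t : ℝ => fderiv ℝ g (x + t • w) w) (Set.Ioi 0) := by
    have hc : Continuous (fun y => fderiv ℝ g y w) :=
      (ContinuousLinearMap.apply ℝ ℝ w).continuous.comp (hg.continuous_fderiv one_ne_zero)
    exact line_integrable (fun y => fderiv ℝ g y w) hc (hcs.fderiv_apply ℝ w) x hw
  have := integral_Ioi_of_hasDerivAt_of_tendsto
    (f := fun t : ℝ => g (x + t • w)) (m := 0) (a := 0)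
    (hg.continuous.comp (by continuity)).continuousWithinAt hderiv hint
    (line_tendsto_zero g hcs x hw)
  simpa using this


lemma clm_eval (ℓ : (ℝ × ℝ) →L[ℝ] ℝ) (p q : ℝ) : ℓ (p, q) = p * ℓ (1, 0) + q * ℓ (0, 1) := by
  have h : ((p, q) : ℝ × ℝ) = p • ((1:ℝ), (0:ℝ)) + q • ((0:ℝ), (1:ℝ)) := by
    simp [Prod.ext_iff]
  rw [h, ℓ.map_add, ℓ.map_smul, ℓ.map_smul, smul_eq_mul, smul_eq_mul]

end VLT

theorem stmt13 (α u₁ u₂ : ℝ) (hunit : u₁ ^ 2 + u₂ ^ 2 = 1) (hne : u₁ * u₂ ≠ 0)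
    (f : ℝ × ℝ → ℝ × ℝ) (hf : ContDiff ℝ 2 f)
    (hcs : HasCompactSupport f) (hsupp : tsupport f ⊆ disc) :
    ∀ x, Dc (u₁, u₂) (Dc (-u₁, u₂) (Lc α (u₁, u₂) (-u₁, u₂) f)) x =
      pt1 α u₁ u₂ (fun y => (f y).2) x - pt2 α u₁ u₂ (fun y => (f y).1) x := by
  intro x
  have hu1 : u₁ ≠ 0 := fun h => hne (by simp [h])
  have hu : ((u₁, u₂) : ℝ × ℝ) ≠ 0 := fun h => hu1 (by simpa using congrArg Prod.fst h)
  have hv : ((-u₁, u₂) : ℝ × ℝ) ≠ 0 := fun h => hu1 (by simpa using congrArg Prod.fst h)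
  set u : ℝ × ℝ := (u₁, u₂) with hudef
  set v : ℝ × ℝ := (-u₁, u₂) with hvdef
  have hf1 : ContDiff ℝ 2 (fun y => (f y).1) := contDiff_fst.comp hf
  have hf2 : ContDiff ℝ 2 (fun y => (f y).2) := contDiff_snd.comp hf
  set g₁ : ℝ × ℝ → ℝ := fun y => dot u (f y) with hg1def
  set g₂ : ℝ × ℝ → ℝ := fun y => dot v (f y) with hg2def
  have hg1 : ContDiff ℝ 2 g₁ := (contDiff_const.mul hf1).add (contDiff_const.mul hf2)
  have hg2 : ContDiff ℝ 2 g₂ := (contDiff_const.mul hf1).add (contDiff_const.mul hf2)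
  have hcs1 : HasCompactSupport g₁ :=
    hcs.comp_left (g := fun p : ℝ × ℝ => dot u p) (by simp [dot])
  have hcs2 : HasCompactSupport g₂ :=
    hcs.comp_left (g := fun p : ℝ × ℝ => dot v p) (by simp [dot])
  set h : ℝ × ℝ → ℝ := fun y => fderiv ℝ g₁ y v with hhdef
  have hh : ContDiff ℝ 1 h :=
    (ContinuousLinearMap.apply ℝ ℝ v).contDiff.comp (hg1.fderiv_right (by norm_num))
  have hhcs : HasCompactSupport h := hcs1.fderiv_apply ℝ v
  -- integrability of CLM-valued integrands
  have hint1 : ∀ z, IntegrableOn (fun t : ℝ => fderiv ℝ g₁ (z + t • u)) (Set.Ioi 0) :=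
    fun z => VLT.line_integrable (fderiv ℝ g₁) (hg1.continuous_fderiv (by norm_num))
      (hcs1.fderiv ℝ) z hu
  have hint2 : ∀ z, IntegrableOn (fun t : ℝ => fderiv ℝ g₂ (z + t • v)) (Set.Ioi 0) :=
    fun z => VLT.line_integrable (fderiv ℝ g₂) (hg2.continuous_fderiv (by norm_num))
      (hcs2.fderiv ℝ) z hv
  -- derivative of Lc
  have hLc : ∀ z, HasFDerivAt (Lc α u v f)
      ((-(∫ t in Set.Ioi (0:ℝ), fderiv ℝ g₁ (z + t • u))) +
        α • (∫ t in Set.Ioi (0:ℝ), fderiv ℝ g₂ (z + t • v))) z := by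
    intro z
    exact ((VLT.hasFDerivAt_Ig g₁ (hg1.of_le (by norm_num)) hcs1 hu z).neg).add
      ((VLT.hasFDerivAt_Ig g₂ (hg2.of_le (by norm_num)) hcs2 hv z).const_mul α)
  -- the first directional derivative, as a function
  have hD1 : Dc v (Lc α u v f) = fun z => (-(∫ t in Set.Ioi (0:ℝ), h (z + t • u))) - α * g₂ z := by
    funext z
    show fderiv ℝ (Lc α u v f) z v = _
    rw [(hLc z).fderiv, ContinuousLinearMap.add_apply, ContinuousLinearMap.neg_apply,
      ContinuousLinearMap.smul_apply, ContinuousLinearMap.integral_apply (hint1 z),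
      ContinuousLinearMap.integral_apply (hint2 z),
      VLT.integral_fderiv_line g₂ (hg2.of_le (by norm_num)) hcs2 hv z]
    simp only [smul_eq_mul, mul_neg]
    ring
  -- the second derivative
  have hΨ : HasFDerivAt (fun z => (-(∫ t in Set.Ioi (0:ℝ), h (z + t • u))) - α * g₂ z)
      ((-(∫ t in Set.Ioi (0:ℝ), fderiv ℝ h (x + t • u))) - α • fderiv ℝ g₂ x) x :=
    ((VLT.hasFDerivAt_Ig h hh hhcs hu x).neg).sub
      (((hg2.differentiable (by norm_num)) x).hasFDerivAt.const_mul α)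
  have hinth : IntegrableOn (fun t : ℝ => fderiv ℝ h (x + t • u)) (Set.Ioi 0) :=
    VLT.line_integrable (fderiv ℝ h) (hh.continuous_fderiv one_ne_zero) (hhcs.fderiv ℝ) x hu
  have key : Dc u (Dc v (Lc α u v f)) x = h x - α * fderiv ℝ g₂ x u := by
    show fderiv ℝ (Dc v (Lc α u v f)) x u = _
    rw [hD1, hΨ.fderiv, ContinuousLinearMap.sub_apply, ContinuousLinearMap.neg_apply,
      ContinuousLinearMap.smul_apply, ContinuousLinearMap.integral_apply hinth,
      VLT.integral_fderiv_line h hh hhcs hu x]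
    simp only [smul_eq_mul]
    ring
  rw [key]
  -- algebra
  have hd1 : DifferentiableAt ℝ (fun y => (f y).1) x := (hf1.differentiable (by norm_num)) x
  have hd2 : DifferentiableAt ℝ (fun y => (f y).2) x := (hf2.differentiable (by norm_num)) x
  have eg1 : fderiv ℝ g₁ x =
      u₁ • fderiv ℝ (fun y => (f y).1) x + u₂ • fderiv ℝ (fun y => (f y).2) x := by
    rw [hg1def]
    show fderiv ℝ (fun y => u₁ * (f y).1 + u₂ * (f y).2) x = _
    rw [fderiv_fun_add ((hd1.const_mul u₁)) ((hd2.const_mul u₂)),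
      fderiv_const_mul hd1, fderiv_const_mul hd2]
  have eg2 : fderiv ℝ g₂ x =
      (-u₁) • fderiv ℝ (fun y => (f y).1) x + u₂ • fderiv ℝ (fun y => (f y).2) x := by
    rw [hg2def]
    show fderiv ℝ (fun y => (-u₁) * (f y).1 + u₂ * (f y).2) x = _
    rw [fderiv_fun_add ((hd1.const_mul (-u₁))) ((hd2.const_mul u₂)),
      fderiv_const_mul hd1, fderiv_const_mul hd2]
  rw [hhdef]
  simp only [eg1, eg2, ContinuousLinearMap.add_apply,
    ContinuousLinearMap.smul_apply, smul_eq_mul, hudef, hvdef]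
  rw [VLT.clm_eval (fderiv ℝ (fun y => (f y).1) x) (-u₁) u₂,
    VLT.clm_eval (fderiv ℝ (fun y => (f y).2) x) (-u₁) u₂,
    VLT.clm_eval (fderiv ℝ (fun y => (f y).1) x) u₁ u₂,
    VLT.clm_eval (fderiv ℝ (fun y => (f y).2) x) u₁ u₂]
  simp only [pt1, pt2]
  ring
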